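/- arXiv:1408.6774 — 3 statements merged into one kernel-verified Lean document; each statement's English description precedes it below -/
import Mathlib

section
/- Let A ∈ [0,1]^{n×n}, x ∈ [0,1]^n and t ≥ 1. Then A^{⊗_L t} ⊗_L x = ((A^(1))^{⊗t} ⊗ x) ⊕ 𝟘, i.e., for every i, (A^{⊗_L t} ⊗_L x)_i = max(0, max_j (((A^(1))^{⊗t})_{ij} + x_j)), where A^{⊗_L t} is the t-th Łukasiewicz matrix power and (A^(1))^{⊗t} is the t-th max-plus matrix power of the matrix with entries a_{ij} − 1. -/
open Finset

/-- Max-plus matrix-vector product: `(A ⊗ x)_i = max_j (a_{ij} + x_j)`. -/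
noncomputable def mpMulVec {ι κ : Type*} [Fintype κ] (A : ι → κ → ℝ) (x : κ → ℝ) (i : ι) : ℝ :=
  ⨆ j, (A i j + x j)

/-- Max-plus matrix-matrix product: `(A ⊗ B)_{ik} = max_j (a_{ij} + b_{jk})`. -/
noncomputable def mpMul {ι κ τ : Type*} [Fintype κ] (A : ι → κ → ℝ) (B : κ → τ → ℝ)
    (i : ι) (k : τ) : ℝ :=
  ⨆ j, (A i j + B j k)

/-- `mpPow1 A s` is the `(s+1)`-st max-plus power of `A`, i.e. `A^{⊗(s+1)}`. -/
noncomputable def mpPow1 {ι : Type*} [Fintype ι] (A : ι → ι → ℝ) : ℕ → ι → ι → ℝ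
  | 0 => A
  | (k + 1) => mpMul A (mpPow1 A k)

/-- Weight of the walk `P 0 → P 1 → ⋯ → P len` in the complete weighted digraph `D(B)`. -/
noncomputable def walkWeight {ι : Type*} (B : ι → ι → ℝ) (len : ℕ) (P : Fin (len + 1) → ι) : ℝ :=
  ∑ t : Fin len, B (P t.castSucc) (P t.succ)

/-- The maximum cycle mean `ρ(A)`: the maximum over all cycles (closed walks of length
`1 ≤ k ≤ n`) of the average weight of the cycle. -/
noncomputable def maxCycleMean {ι : Type*} [Fintype ι] (A : ι → ι → ℝ) : ℝ :=
  sSup { r | ∃ k, 1 ≤ k ∧ k ≤ Fintype.card ι ∧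
    ∃ P : Fin (k + 1) → ι, P 0 = P (Fin.last k) ∧ r = walkWeight A k P / (k : ℝ) }

/-- Kleene star of `A` (meaningful when `ρ(A) ≤ 0`):
`A*_{ii} = max(0, max_{1 ≤ k ≤ n-1} (A^{⊗k})_{ii})` and
`A*_{ij} = max_{1 ≤ k ≤ n-1} (A^{⊗k})_{ij}` for `i ≠ j`. -/
noncomputable def kleeneStar {ι : Type*} [Fintype ι] [DecidableEq ι] (A : ι → ι → ℝ)
    (i j : ι) : ℝ :=
  if i = j then max 0 (⨆ m : Fin (Fintype.card ι - 1), mpPow1 A (m : ℕ) i i)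
  else ⨆ m : Fin (Fintype.card ι - 1), mpPow1 A (m : ℕ) i j

/-- Max-Łukasiewicz matrix-vector product: `(A ⊗_L x)_i = max_j max(0, a_{ij} + x_j - 1)`. -/
noncomputable def lukMulVec {ι κ : Type*} [Fintype κ] (A : ι → κ → ℝ) (x : κ → ℝ) (i : ι) : ℝ :=
  ⨆ j, max 0 (A i j + x j - 1)

/-- Max-Łukasiewicz scalar action: `(λ ⊗_L x)_i = max(0, λ + x_i - 1)`. -/
noncomputable def lukSMul {ι : Type*} (lam : ℝ) (x : ι → ℝ) (i : ι) : ℝ :=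
  max 0 (lam + x i - 1)

/-- Max-Łukasiewicz matrix-matrix product: `(A ⊗_L B)_{ik} = max_j max(0, a_{ij} + b_{jk} - 1)`. -/
noncomputable def lukMul {ι κ τ : Type*} [Fintype κ] (A : ι → κ → ℝ) (B : κ → τ → ℝ)
    (i : ι) (k : τ) : ℝ :=
  ⨆ j, max 0 (A i j + B j k - 1)

/-- `lukPow1 A s` is the `(s+1)`-st Łukasiewicz power of `A`, i.e. `A^{⊗_L (s+1)}`. -/
noncomputable def lukPow1 {ι : Type*} [Fintype ι] (A : ι → ι → ℝ) : ℕ → ι → ι → ℝ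
  | 0 => A
  | (t + 1) => lukMul A (lukPow1 A t)

/-- Max-plus matrix-vector product of a real matrix with a vector over `ℝ ∪ {-∞}` (`EReal`). -/
noncomputable def mpMulVecE {ι κ : Type*} [Fintype κ] (A : ι → κ → ℝ) (v : κ → EReal)
    (i : ι) : EReal :=
  ⨆ j, ((A i j : EReal) + v j)

/-- Node `i` of the weighted digraph `D(B)` is secure if every walk starting at `i` has
nonpositive weight. -/
def SecureNode {ι : Type*} (B : ι → ι → ℝ) (i : ι) : Prop :=
  ∀ (len : ℕ) (P : Fin (len + 1) → ι), P 0 = i → walkWeight B len P ≤ 0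

/-- The partition `(K, L)` of `{1,…,n}` is secure with respect to `D(B)` (with parameter `λ`):
if `L = ∅` this means `D(B)` is `λ`-secure (every walk has weight `≤ λ`); otherwise it means
that every walk starting in `L` whose all other nodes lie in `K` has nonpositive weight.
(If `L` is everything, the latter condition holds trivially, matching the convention.) -/
def SecurePartition {n : ℕ} (B : Fin n → Fin n → ℝ) (lam : ℝ) (K L : Finset (Fin n)) : Prop :=
  if L = ∅ then
    ∀ (len : ℕ) (P : Fin (len + 1) → Fin n), walkWeight B len P ≤ lam
  else
    ∀ (len : ℕ) (P : Fin (len + 1) → Fin n),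
      P 0 ∈ L → (∀ t : Fin (len + 1), t ≠ 0 → P t ∈ K) → walkWeight B len P ≤ 0

section Aux

variable {ι : Type*} [Fintype ι]

lemma bddR (f : ι → ℝ) : BddAbove (Set.range f) := Set.Finite.bddAbove (Set.finite_range f)

lemma max0_ciSup [Nonempty ι] (f : ι → ℝ) : (⨆ j, max 0 (f j)) = max 0 (⨆ j, f j) := by
  apply le_antisymm
  · exact ciSup_le fun j => max_le_max le_rfl (le_ciSup (bddR f) j)
  · refine max_le ?_ (ciSup_le fun j => (le_max_right 0 (f j)).trans
      (le_ciSup (bddR fun j => max 0 (f j)) j))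
    exact (le_max_left 0 (f (Classical.arbitrary ι))).trans
      (le_ciSup (bddR fun j => max 0 (f j)) (Classical.arbitrary ι))

lemma add_ciSupR [Nonempty ι] (c : ℝ) (f : ι → ℝ) : c + ⨆ j, f j = ⨆ j, (c + f j) := by
  apply le_antisymm
  · have : (⨆ j, f j) ≤ (⨆ j, (c + f j)) - c := by
      refine ciSup_le fun j => ?_
      have := le_ciSup (bddR fun j => c + f j) j
      linarith
    linarith
  · exact ciSup_le fun j => add_le_add_right (le_ciSup (bddR f) j) c

lemma ciSup_commR {κ : Type*} [Fintype κ] [Nonempty ι] [Nonempty κ] (f : ι → κ → ℝ) :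
    ⨆ j, ⨆ k, f j k = ⨆ k, ⨆ j, f j k := by
  apply le_antisymm
  · refine ciSup_le fun a => ciSup_le fun b => ?_
    exact le_trans (le_ciSup (bddR fun a => f a b) a) (le_ciSup (bddR fun b => ⨆ a, f a b) b)
  · refine ciSup_le fun b => ciSup_le fun a => ?_
    exact le_trans (le_ciSup (bddR fun b => f a b) b) (le_ciSup (bddR fun a => ⨆ b, f a b) a)

lemma max0_shift {a s : ℝ} (ha : a ≤ 1) : max 0 (a + max 0 s - 1) = max 0 (a + s - 1) := by
  rcases le_or_gt s 0 with h | h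
  · have e1 : max 0 s = 0 := max_eq_left h
    rw [e1]
    have h1 : a + 0 - 1 ≤ 0 := by linarith
    have h2 : a + s - 1 ≤ 0 := by linarith
    rw [max_eq_left h1, max_eq_left h2]
  · rw [max_eq_right h.le]

end Aux


section Main

variable {n : ℕ}

lemma iSup_max0_shift {ι : Type*} [Fintype ι] [Nonempty ι] {c : ℝ} (hc : c ≤ 1) (f : ι → ℝ) :
    max 0 (c + max 0 (⨆ j, f j) - 1) = ⨆ j, max 0 (c + f j - 1) := by
  rw [max0_shift hc, show c + (⨆ j, f j) - 1 = (c - 1) + ⨆ j, f j by ring, add_ciSupR,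
    ← max0_ciSup]
  exact iSup_congr fun j => by ring_nf

lemma luk_assoc [Nonempty (Fin n)] (A M : Fin n → Fin n → ℝ) (hA : ∀ i j, A i j ≤ 1)
    (x : Fin n → ℝ) (hx : ∀ j, x j ≤ 1) (i : Fin n) :
    lukMulVec (lukMul A M) x i = lukMulVec A (lukMulVec M x) i := by
  unfold lukMulVec lukMul
  calc (⨆ j, max 0 ((⨆ k, max 0 (A i k + M k j - 1)) + x j - 1))
      = ⨆ j, ⨆ k, max 0 (x j + (A i k + M k j - 1) - 1) := by
        refine iSup_congr fun j => ?_
        rw [max0_ciSup, show (max 0 (⨆ k, A i k + M k j - 1)) + x j - 1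
            = x j + max 0 (⨆ k, A i k + M k j - 1) - 1 by ring, iSup_max0_shift (hx j)]
    _ = ⨆ k, ⨆ j, max 0 (x j + (A i k + M k j - 1) - 1) := ciSup_commR _
    _ = ⨆ k, max 0 (A i k + (⨆ j, max 0 (M k j + x j - 1)) - 1) := by
        refine iSup_congr fun k => Eq.symm ?_
        rw [max0_ciSup, iSup_max0_shift (hA i k)]
        exact iSup_congr fun j => by ring_nf

lemma mp_assoc [Nonempty (Fin n)] (B N : Fin n → Fin n → ℝ) (x : Fin n → ℝ) (i : Fin n) :
    mpMulVec (mpMul B N) x i = mpMulVec B (mpMulVec N x) i := by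
  unfold mpMulVec mpMul
  calc (⨆ j, (⨆ k, B i k + N k j) + x j)
      = ⨆ j, ⨆ k, (x j + (B i k + N k j)) := by
        refine iSup_congr fun j => ?_
        rw [show (⨆ k, B i k + N k j) + x j = x j + ⨆ k, (B i k + N k j) by ring, add_ciSupR]
    _ = ⨆ k, ⨆ j, (x j + (B i k + N k j)) := ciSup_commR _
    _ = ⨆ k, B i k + ⨆ j, (N k j + x j) := by
        refine iSup_congr fun k => ?_
        rw [add_ciSupR]
        exact iSup_congr fun j => by ring

end Main

/-- for `t ≥ 1`, `A^{⊗_L t} ⊗_L x = ((A^{(1)})^{⊗ t} ⊗ x) ⊕ 𝟘` componentwise.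
(Here `lukPow1 A (t-1) = A^{⊗_L t}` and `mpPow1 B (t-1) = B^{⊗ t}`.) -/
theorem stmt17 {n : ℕ} (A : Fin n → Fin n → ℝ) (hA : ∀ i j, A i j ∈ Set.Icc (0 : ℝ) 1)
    (x : Fin n → ℝ) (hx : ∀ j, x j ∈ Set.Icc (0 : ℝ) 1) (t : ℕ) (ht : 1 ≤ t) :
    ∀ i, lukMulVec (lukPow1 A (t - 1)) x i =
      max 0 (mpMulVec (mpPow1 (fun i j => A i j - 1) (t - 1)) x i) := by
  intro i
  haveI : Nonempty (Fin n) := ⟨i⟩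
  obtain ⟨s, rfl⟩ : ∃ s, t = s + 1 := ⟨t - 1, by omega⟩
  simp only [Nat.add_sub_cancel]
  clear ht
  induction s generalizing i with
  | zero =>
    show lukMulVec A x i = _
    unfold lukMulVec mpPow1 mpMulVec
    rw [max0_ciSup]
    congr 1
    exact iSup_congr fun j => by ring
  | succ s ih =>
    show lukMulVec (lukMul A (lukPow1 A s)) x i = _
    rw [luk_assoc A _ (fun i j => (hA i j).2) x (fun j => (hx j).2)]
    have hy : lukMulVec (lukPow1 A s) x = fun j =>
        max 0 (mpMulVec (mpPow1 (fun i j => A i j - 1) s) x j) := funext fun j => ih j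
    rw [hy]
    show (⨆ j, max 0 (A i j + max 0 (mpMulVec (mpPow1 (fun i j => A i j - 1) s) x j) - 1)) = _
    have : ∀ j, max 0 (A i j + max 0 (mpMulVec (mpPow1 (fun i j => A i j - 1) s) x j) - 1)
        = max 0 ((A i j - 1) + mpMulVec (mpPow1 (fun i j => A i j - 1) s) x j) := fun j => by
      rw [max0_shift (hA i j).2]; congr 1; ring
    rw [iSup_congr this, max0_ciSup]
    congr 1
    show mpMulVec (fun i j => A i j - 1) _ i = _
    rw [show mpPow1 (fun i j => A i j - 1) (s + 1)
        = mpMul (fun i j => A i j - 1) (mpPow1 (fun i j => A i j - 1) s) from rfl,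
      mp_assoc]
end

section
/- Let A ∈ [0,1]^{n×n} and t ≥ 2. Then A^{⊗_L t} = ((A^(1))^{⊗(t−1)} ⊗ A) ⊕ O, i.e., for all i,k, (A^{⊗_L t})_{ik} = max(0, max_j (((A^(1))^{⊗(t−1)})_{ij} + a_{jk})), where O is the n×n zero matrix. -/
open Finset

private lemma iSup_fin {n : ℕ} (hn : (univ : Finset (Fin n)).Nonempty) (f : Fin n → ℝ) :
    (⨆ j, f j) = univ.sup' hn f := by
  haveI : Nonempty (Fin n) := ⟨hn.choose⟩
  exact (sup'_univ_eq_ciSup f).symm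

private lemma max0_sup' {α} {s : Finset α} (H : s.Nonempty) (f : α → ℝ) :
    max 0 (s.sup' H f) = s.sup' H (fun j => max 0 (f j)) :=
  comp_sup'_eq_sup'_comp H (max 0) (fun x y => sup_sup_distrib_left 0 x y)

private lemma sup'_add_r {α} {s : Finset α} (H : s.Nonempty) (f : α → ℝ) (c : ℝ) :
    s.sup' H f + c = s.sup' H (fun j => f j + c) :=
  comp_sup'_eq_sup'_comp H (· + c) (fun x y => (max_add_add_right x y c).symm)

private lemma add_sup'_l {α} {s : Finset α} (H : s.Nonempty) (f : α → ℝ) (c : ℝ) :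
    c + s.sup' H f = s.sup' H (fun j => c + f j) :=
  comp_sup'_eq_sup'_comp H (c + ·) (fun x y => (max_add_add_left c x y).symm)

private lemma max0_shift_s18 {c m : ℝ} (hc : c ≤ 0) : max 0 (c + max 0 m) = max 0 (c + m) := by
  rcases le_total m 0 with h | h
  · rw [max_eq_left h, max_eq_left (show c + 0 ≤ 0 by linarith),
      max_eq_left (show c + m ≤ 0 by linarith)]
  · rw [max_eq_right h]

private lemma key18 {n : ℕ} (A : Fin n → Fin n → ℝ) (hA : ∀ i j, A i j ∈ Set.Icc (0:ℝ) 1)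
    (s : ℕ) : ∀ i k : Fin n, lukPow1 A (s + 1) i k =
      max 0 (mpMul (mpPow1 (fun i j => A i j - 1) s) A i k) := by
  induction s with
  | zero =>
    intro i k
    have hn : (univ : Finset (Fin n)).Nonempty := ⟨i, mem_univ i⟩
    simp only [lukPow1, mpPow1, lukMul, mpMul]
    rw [iSup_fin hn, iSup_fin hn, max0_sup']
    exact sup'_congr hn rfl (fun j _ => by ring_nf)
  | succ s ih =>
    intro i k
    have hn : (univ : Finset (Fin n)).Nonempty := ⟨i, mem_univ i⟩
    set B : Fin n → Fin n → ℝ := fun i j => A i j - 1 with hB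
    have hL : lukPow1 A (s + 1 + 1) i k
        = univ.sup' hn (fun j => max 0 (B i j + mpMul (mpPow1 B s) A j k)) := by
      rw [show lukPow1 A (s + 1 + 1) i k
          = ⨆ j, max 0 (A i j + lukPow1 A (s + 1) j k - 1) from rfl]
      rw [iSup_fin hn]
      refine sup'_congr hn rfl (fun j _ => ?_)
      rw [ih j k]
      have hc : B i j ≤ 0 := by have := (hA i j).2; simp only [hB]; linarith
      calc max 0 (A i j + max 0 (mpMul (mpPow1 B s) A j k) - 1)
          = max 0 (B i j + max 0 (mpMul (mpPow1 B s) A j k)) := by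
            simp only [hB]; congr 1; ring
        _ = max 0 (B i j + mpMul (mpPow1 B s) A j k) := max0_shift_s18 hc
    have hR : mpMul (mpPow1 B (s + 1)) A i k
        = univ.sup' hn (fun j => B i j + mpMul (mpPow1 B s) A j k) := by
      simp only [mpPow1, mpMul]
      rw [iSup_fin hn]
      calc univ.sup' hn (fun l => (⨆ j, B i j + mpPow1 B s j l) + A l k)
          = univ.sup' hn (fun l => univ.sup' hn (fun j => B i j + mpPow1 B s j l) + A l k) :=
            sup'_congr hn rfl (fun l _ => by rw [iSup_fin hn])
        _ = univ.sup' hn (fun l => univ.sup' hn (fun j => (B i j + mpPow1 B s j l) + A l k)) :=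
            sup'_congr hn rfl (fun l _ => sup'_add_r hn _ _)
        _ = univ.sup' hn (fun j => univ.sup' hn (fun l => (B i j + mpPow1 B s j l) + A l k)) :=
            Finset.sup'_comm hn hn _
        _ = univ.sup' hn (fun j => B i j + univ.sup' hn (fun l => mpPow1 B s j l + A l k)) := by
            refine sup'_congr hn rfl (fun j _ => ?_)
            rw [add_sup'_l hn]
            exact sup'_congr hn rfl (fun l _ => by ring)
        _ = univ.sup' hn (fun j => B i j + ⨆ l, mpPow1 B s j l + A l k) :=
            sup'_congr hn rfl (fun j _ => by rw [iSup_fin hn])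
    rw [hL, hR, max0_sup']

/-- for `t ≥ 2`, `A^{⊗_L t} = ((A^{(1)})^{⊗(t-1)} ⊗ A) ⊕ O` entrywise.
(Here `lukPow1 A (t-1) = A^{⊗_L t}` and `mpPow1 B (t-2) = B^{⊗(t-1)}`.) -/
theorem stmt18 {n : ℕ} (A : Fin n → Fin n → ℝ) (hA : ∀ i j, A i j ∈ Set.Icc (0 : ℝ) 1)
    (t : ℕ) (ht : 2 ≤ t) :
    ∀ i k, lukPow1 A (t - 1) i k =
      max 0 (mpMul (mpPow1 (fun i j => A i j - 1) (t - 2)) A i k) := by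
  obtain ⟨s, rfl⟩ : ∃ s, t = s + 2 := ⟨t - 2, by omega⟩
  intro i k
  have h := key18 A hA s i k
  simpa [show s + 2 - 1 = s + 1 by omega, show s + 2 - 2 = s by omega] using h
end

section
/- For every A ∈ [0,1]^{n×n}, the sequence of Łukasiewicz matrix powers {A^{⊗_L t}}_{t≥1} is ultimately periodic: there exist T ≥ 1 and p ≥ 1 such that A^{⊗_L (t+p)} = A^{⊗_L t} for all t ≥ T. Moreover, if ρ(A) < 1 then there exists T such that A^{⊗_L t} is the zero matrix for all t ≥ T. -/
open Finset

section Helpers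

open Finset

/-- ℕ-indexed walk weight. -/
noncomputable def Wt {n : ℕ} (B : Fin n → Fin n → ℝ) (len : ℕ) (Q : ℕ → Fin n) : ℝ :=
  ∑ t ∈ Finset.range len, B (Q t) (Q (t+1))

variable {n : ℕ}

lemma ciSup_fin_eq_max [Nonempty (Fin n)] (g : Fin n → ℝ) :
    ∃ j0, (⨆ j, g j) = g j0 ∧ ∀ j, g j ≤ g j0 := by
  obtain ⟨j0, hj0⟩ := Finite.exists_max g
  exact ⟨j0, le_antisymm (ciSup_le hj0) (le_ciSup (Set.finite_range g).bddAbove j0), hj0⟩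

lemma max_zero_ciSup [Nonempty (Fin n)] (g : Fin n → ℝ) :
    (⨆ j, max 0 (1 + g j)) = max 0 (1 + ⨆ j, g j) := by
  obtain ⟨j0, hj0, hmax⟩ := ciSup_fin_eq_max g
  rw [hj0]
  apply le_antisymm
  · exact ciSup_le fun j => max_le (le_max_left _ _)
      (le_max_of_le_right (by linarith [hmax j]))
  · exact le_ciSup (Set.finite_range fun j => max 0 (1 + g j)).bddAbove j0

/-- Removal of a closed subwalk. -/
lemma Wt_removal (B : Fin n → Fin n → ℝ) {len u v : ℕ} (Q : ℕ → Fin n)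
    (huv : u < v) (hv : v ≤ len) (hQ : Q u = Q v) :
    Wt B len Q = Wt B (len - (v - u)) (fun t => if t < u then Q t else Q (t + (v - u)))
      + Wt B (v - u) (fun s => Q (u + s)) := by
  set d := v - u with hd
  have hdu : u + d = v := by omega
  set Q' : ℕ → Fin n := fun t => if t < u then Q t else Q (t + d) with hQ'
  have h1 : Wt B len Q = (∑ t ∈ Finset.range u, B (Q t) (Q (t+1)))
      + (∑ t ∈ Finset.Ico u v, B (Q t) (Q (t+1)))
      + (∑ t ∈ Finset.Ico v len, B (Q t) (Q (t+1))) := by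
    rw [Wt, Finset.range_eq_Ico, ← Finset.sum_Ico_consecutive _ (by omega : (0:ℕ) ≤ v) hv,
      ← Finset.sum_Ico_consecutive _ (by omega : (0:ℕ) ≤ u) (by omega : u ≤ v),
      ← Finset.range_eq_Ico]
  have h2 : Wt B (v - u) (fun s => Q (u + s)) = ∑ t ∈ Finset.Ico u v, B (Q t) (Q (t+1)) := by
    rw [Finset.sum_Ico_eq_sum_range, Wt]
    exact Finset.sum_congr rfl fun t ht => by rw [Nat.add_assoc]
  have h3 : Wt B (len - d) Q' = (∑ t ∈ Finset.range u, B (Q t) (Q (t+1)))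
      + (∑ t ∈ Finset.Ico v len, B (Q t) (Q (t+1))) := by
    rw [Wt, Finset.range_eq_Ico, ← Finset.sum_Ico_consecutive _ (by omega : (0:ℕ) ≤ u)
      (by omega : u ≤ len - d), ← Finset.range_eq_Ico]
    congr 1
    · apply Finset.sum_congr rfl
      intro t ht
      simp only [Finset.mem_range] at ht
      have h1' : Q' t = Q t := by simp [hQ', ht]
      have h2' : Q' (t+1) = Q (t+1) := by
        by_cases h : t + 1 < u
        · simp [hQ', h]
        · have hteq : t + 1 = u := by omega
          simp only [hQ', hteq, lt_irrefl, if_false]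
          rw [hdu, ← hQ]
      rw [h1', h2']
    · rw [Finset.sum_Ico_eq_sum_range, Finset.sum_Ico_eq_sum_range]
      have hlen : len - d - u = len - v := by omega
      rw [hlen]
      apply Finset.sum_congr rfl
      intro t ht
      simp only [Finset.mem_range] at ht
      have e1 : Q' (u + t) = Q (v + t) := by
        simp only [hQ', if_neg (by omega : ¬ u + t < u)]
        congr 1; omega
      have e2 : Q' (u + t + 1) = Q (v + t + 1) := by
        simp only [hQ', if_neg (by omega : ¬ u + t + 1 < u)]
        congr 1; omega
      rw [e1, e2]
  rw [h1, h2, h3]; ring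

end Helpers
section Helpers2

variable {n : ℕ}

/-- mpPow1 is attained by a walk. -/
lemma mpPow1_attained [Nonempty (Fin n)] (B : Fin n → Fin n → ℝ) :
    ∀ (t : ℕ) (i k : Fin n), ∃ Q : ℕ → Fin n, Q 0 = i ∧ Q (t+1) = k ∧
      mpPow1 B t i k = Wt B (t+1) Q := by
  intro t
  induction t with
  | zero =>
    intro i k
    refine ⟨fun s => if s = 0 then i else k, by simp, by simp, ?_⟩
    simp [mpPow1, Wt]
  | succ t ih =>
    intro i k
    obtain ⟨j0, hj0, _⟩ := ciSup_fin_eq_max (fun j => B i j + mpPow1 B t j k)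
    obtain ⟨Q', hQ0, hQl, hQw⟩ := ih j0 k
    refine ⟨fun s => if s = 0 then i else Q' (s - 1), by simp, by simp [hQl], ?_⟩
    have hsplit : Wt B (t+2) (fun s => if s = 0 then i else Q' (s - 1))
        = Wt B (t+1) Q' + B i j0 := by
      simp only [Wt]
      rw [Finset.sum_range_succ']
      have he : ∀ s ∈ Finset.range (t+1),
          B (if s + 1 = 0 then i else Q' (s + 1 - 1)) (if s + 1 + 1 = 0 then i else Q' (s + 1 + 1 - 1))
          = B (Q' s) (Q' (s+1)) := by
        intro s hs; simp
      rw [Finset.sum_congr rfl he]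
      simp [hQ0]
    show mpMul B (mpPow1 B t) i k = _
    rw [mpMul, hj0, hsplit, hQw]
    ring

/-- mpPow1 dominates every walk. -/
lemma mpPow1_ub [Nonempty (Fin n)] (B : Fin n → Fin n → ℝ) :
    ∀ (t : ℕ) (Q : ℕ → Fin n), Wt B (t+1) Q ≤ mpPow1 B t (Q 0) (Q (t+1)) := by
  intro t
  induction t with
  | zero => intro Q; simp [mpPow1, Wt]
  | succ t ih =>
    intro Q
    have hsplit : Wt B (t+2) Q = B (Q 0) (Q 1) + Wt B (t+1) (fun s => Q (s+1)) := by
      simp only [Wt]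
      rw [Finset.sum_range_succ']
      ring
    have h1 : Wt B (t+1) (fun s => Q (s+1)) ≤ mpPow1 B t (Q 1) (Q (t+2)) :=
      ih fun s => Q (s+1)
    calc Wt B (t+2) Q = B (Q 0) (Q 1) + Wt B (t+1) (fun s => Q (s+1)) := hsplit
      _ ≤ B (Q 0) (Q 1) + mpPow1 B t (Q 1) (Q (t+2)) := add_le_add_right h1 _
      _ ≤ mpPow1 B (t+1) (Q 0) (Q (t+2)) :=
          le_ciSup (Set.finite_range fun j => B (Q 0) j + mpPow1 B t j (Q (t+2))).bddAbove (Q 1)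

/-- The key identity: Łukasiewicz powers via max-plus powers of `B = A - 1`. -/
lemma lukPow1_eq_mp [Nonempty (Fin n)] (A : Fin n → Fin n → ℝ)
    (hA : ∀ i j, A i j ∈ Set.Icc (0:ℝ) 1) (t : ℕ) (i k : Fin n) :
    lukPow1 A t i k = max 0 (1 + mpPow1 (fun i j => A i j - 1) t i k) := by
  set B : Fin n → Fin n → ℝ := fun i j => A i j - 1 with hB
  induction t generalizing i k with
  | zero =>
    show A i k = _
    simp only [mpPow1, hB]
    rw [show (1 + (A i k - 1)) = A i k by ring, max_eq_right (hA i k).1]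
  | succ t ih =>
    show lukMul A (lukPow1 A t) i k = max 0 (1 + mpMul B (mpPow1 B t) i k)
    rw [lukMul, mpMul, ← max_zero_ciSup (fun j => B i j + mpPow1 B t j k)]
    apply iSup_congr
    intro j
    rw [ih]
    have hb : A i j - 1 ≤ 0 := by linarith [(hA i j).2]
    set M := mpPow1 B t j k with hM
    have hBij : B i j = A i j - 1 := rfl
    rcases le_total (1 + M) 0 with h | h
    · rw [max_eq_left h, max_eq_left (by linarith : A i j + 0 - 1 ≤ 0),
        max_eq_left (by rw [hBij]; linarith : 1 + (B i j + M) ≤ 0)]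
    · rw [max_eq_right h]
      congr 1
      rw [hBij]; ring

end Helpers2
section Helpers3

variable {n : ℕ}

/-- Weights of closed walks of length between 1 and n. -/
def CW (B : Fin n → Fin n → ℝ) : Set ℝ :=
  { w | ∃ (d : ℕ) (Q : ℕ → Fin n), 1 ≤ d ∧ d ≤ n ∧ Q 0 = Q d ∧ w = Wt B d Q }

/-- Weights of walks of length < n. -/
def SWs (B : Fin n → Fin n → ℝ) : Set ℝ :=
  { w | ∃ (len : ℕ) (Q : ℕ → Fin n), len < n ∧ w = Wt B len Q }

lemma Wt_congr (B : Fin n → Fin n → ℝ) (len : ℕ) {Q Q' : ℕ → Fin n}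
    (h : ∀ s ≤ len, Q s = Q' s) : Wt B len Q = Wt B len Q' := by
  apply Finset.sum_congr rfl
  intro t ht
  simp only [Finset.mem_range] at ht
  rw [h t (by omega), h (t+1) (by omega)]

lemma CW_finite (hn : 0 < n) (B : Fin n → Fin n → ℝ) : (CW B).Finite := by
  apply Set.Finite.subset (Set.finite_range
    (fun p : Fin n × (Fin (n+1) → Fin n) => Wt B (p.1.val + 1) (fun t => p.2 ⟨min t n, by omega⟩)))
  rintro w ⟨d, Q, hd1, hdn, _, rfl⟩
  refine ⟨⟨⟨d - 1, by omega⟩, fun s => Q s.val⟩, ?_⟩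
  simp only [Fin.val_mk]
  rw [show (d - 1) + 1 = d by omega]
  apply Wt_congr
  intro s hs
  congr 1
  omega

lemma SWs_finite (hn : 0 < n) (B : Fin n → Fin n → ℝ) : (SWs B).Finite := by
  apply Set.Finite.subset (Set.finite_range
    (fun p : Fin n × (Fin (n+1) → Fin n) => Wt B p.1.val (fun t => p.2 ⟨min t n, by omega⟩)))
  rintro w ⟨len, Q, hlen, rfl⟩
  refine ⟨⟨⟨len, hlen⟩, fun s => Q s.val⟩, ?_⟩
  simp only [Fin.val_mk]
  apply Wt_congr
  intro s hs
  congr 1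
  omega

/-- Every walk weight decomposes as a short walk weight plus cycle weights. -/
lemma walk_decomp (hn : 0 < n) (B : Fin n → Fin n → ℝ) :
    ∀ (len : ℕ) (Q : ℕ → Fin n), ∃ (w0 : ℝ) (m : ℕ) (c : Fin m → ℝ),
      w0 ∈ SWs B ∧ (∀ i, c i ∈ CW B) ∧ Wt B len Q = w0 + ∑ i, c i ∧ len ≤ (n-1) + m * n := by
  intro len
  induction len using Nat.strong_induction_on with
  | _ len ih =>
    intro Q
    by_cases hlen : len < n
    · exact ⟨Wt B len Q, 0, fun i => 0, ⟨len, Q, hlen, rfl⟩, fun i => i.elim0,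
        by simp, by omega⟩
    · push_neg at hlen
      have hni : ¬ Function.Injective (fun s : Fin (n+1) => Q s.val) := by
        intro hinj
        have := Fintype.card_le_of_injective _ hinj
        simp at this
      rw [Function.not_injective_iff] at hni
      obtain ⟨a, b, hab, hne⟩ := hni
      obtain ⟨u, v, huv, hQuv, hvn⟩ : ∃ u v : ℕ, u < v ∧ Q u = Q v ∧ v ≤ n := by
        rcases lt_or_gt_of_ne (fun h => hne (Fin.ext h) : a.val ≠ b.val) with h | h
        · exact ⟨a.val, b.val, h, hab, Nat.lt_succ_iff.mp b.isLt⟩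
        · exact ⟨b.val, a.val, h, hab.symm, Nat.lt_succ_iff.mp a.isLt⟩
      set d := v - u with hd
      have hrem := Wt_removal B (len := len) Q huv (by omega) hQuv
      obtain ⟨w0, m, c, hw0, hc, heq, hlb⟩ := ih (len - d) (by omega)
        (fun t => if t < u then Q t else Q (t + d))
      refine ⟨w0, m + 1, Fin.cons (Wt B d (fun s => Q (u + s))) c, hw0, ?_, ?_, ?_⟩
      · intro i
        refine Fin.cases ?_ (fun j => by rw [Fin.cons_succ]; exact hc j) i
        rw [Fin.cons_zero]
        exact ⟨d, fun s => Q (u + s), by omega, by omega,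
          by show Q (u+0) = Q (u+d); rw [Nat.add_zero, show u + d = v by omega]; exact hQuv, rfl⟩
      · rw [hrem, heq, Fin.sum_cons]
        ring
      · calc len = (len - d) + d := by omega
          _ ≤ ((n-1) + m * n) + n := add_le_add hlb (by omega)
          _ = (n-1) + (m+1) * n := by rw [Nat.add_assoc, Nat.succ_mul]

end Helpers3
section Helpers4

/-- Sums of at most `m` elements of `S` (with padding by 0). -/
def NS (S : Set ℝ) : ℕ → Set ℝ
  | 0 => {0}
  | (m+1) => NS S m ∪ Set.image2 (· + ·) S (NS S m)

lemma NS_finite {S : Set ℝ} (hS : S.Finite) : ∀ m, (NS S m).Finite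
  | 0 => Set.finite_singleton 0
  | (m+1) => ((NS_finite hS m).union (Set.Finite.image2 _ hS (NS_finite hS m)))

lemma NS_mono {S : Set ℝ} {m M : ℕ} (h : m ≤ M) : NS S m ⊆ NS S M := by
  induction M with
  | zero => rw [Nat.le_zero.mp h]
  | succ M ih =>
    rcases Nat.lt_succ_iff_lt_or_eq.mp (Nat.lt_succ_of_le h) with h' | h'
    · exact (ih (by omega)).trans Set.subset_union_left
    · rw [h']

lemma sum_mem_NS {S : Set ℝ} : ∀ (m : ℕ) (c : Fin m → ℝ), (∀ i, c i ∈ S) → (∑ i, c i) ∈ NS S m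
  | 0, c, _ => by simp [NS]
  | (m+1), c, hc => by
    rw [Fin.sum_univ_succ]
    exact Set.mem_union_right _
      (Set.mem_image2_of_mem (hc 0) (sum_mem_NS m (fun i => c i.succ) (fun i => hc i.succ)))

lemma neg_filter {m : ℕ} (c : Fin m → ℝ) (S : Set ℝ) (hmem : ∀ i, c i ∈ S)
    (hle : ∀ i, c i ≤ 0) :
    ∃ (m' : ℕ) (c' : Fin m' → ℝ), (∀ j, c' j ∈ S ∧ c' j < 0) ∧ ∑ j, c' j = ∑ i, c i := by
  classical
  set s := Finset.univ.filter (fun i => c i < 0) with hs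
  have hsum : ∑ i, c i = ∑ i ∈ s, c i := by
    rw [← Finset.sum_filter_add_sum_filter_not Finset.univ (fun i => c i < 0) c, ← hs]
    have hz : ∑ i ∈ Finset.univ.filter (fun i => ¬ c i < 0), c i = 0 :=
      Finset.sum_eq_zero fun i hi =>
        le_antisymm (hle i) (not_lt.mp (Finset.mem_filter.mp hi).2)
    rw [hz, add_zero]
  have e : Fin (Fintype.card {x // x ∈ s}) ≃ {x // x ∈ s} := (Fintype.equivFin _).symm
  refine ⟨Fintype.card {x // x ∈ s}, fun j => c (e j).val, ?_, ?_⟩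
  · intro j
    exact ⟨hmem _, (Finset.mem_filter.mp (e j).property).2⟩
  · rw [hsum, Equiv.sum_comp e (fun x : {x // x ∈ s} => c x.val), ← Finset.sum_coe_sort s c]

lemma exists_delta {S : Set ℝ} (hS : S.Finite) :
    ∃ δ : ℝ, 0 < δ ∧ ∀ x ∈ S, x < 0 → x ≤ -δ := by
  classical
  have hT : {x ∈ S | x < 0}.Finite := hS.subset (Set.sep_subset S _)
  rcases (hT.toFinset).eq_empty_or_nonempty with h | h
  · refine ⟨1, one_pos, fun x hx hxn => absurd ?_ (Finset.notMem_empty x)⟩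
    rw [← h]; exact hT.mem_toFinset.mpr ⟨hx, hxn⟩
  · set w := hT.toFinset.max' h with hw
    have hwS : w ∈ {x ∈ S | x < 0} := hT.mem_toFinset.mp (hT.toFinset.max'_mem h)
    refine ⟨-w, by linarith [hwS.2], fun x hx hxn => ?_⟩
    rw [neg_neg]
    exact hT.toFinset.le_max' x (hT.mem_toFinset.mpr ⟨hx, hxn⟩)

end Helpers4
/-- the sequence of Łukasiewicz matrix powers `{A^{⊗_L t}}_{t ≥ 1}` is ultimately
periodic, and if `ρ(A) < 1` then it is ultimately the zero matrix.
(Here `lukPow1 A s = A^{⊗_L (s+1)}`, so `s` ranges over `ℕ` as `t = s + 1` ranges over `t ≥ 1`.) -/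
theorem stmt19 {n : ℕ} (hn : 0 < n) (A : Fin n → Fin n → ℝ)
    (hA : ∀ i j, A i j ∈ Set.Icc (0 : ℝ) 1) :
    (∃ T p : ℕ, 1 ≤ p ∧ ∀ t, T ≤ t → lukPow1 A (t + p) = lukPow1 A t) ∧
      (maxCycleMean A < 1 → ∃ T : ℕ, ∀ t, T ≤ t → lukPow1 A t = fun _ _ => 0) := by
  haveI : Nonempty (Fin n) := ⟨⟨0, hn⟩⟩
  set b : Fin n → Fin n → ℝ := fun i j => A i j - 1 with hbdef
  have hb0 : ∀ i j, b i j ≤ 0 := fun i j => by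
    simp only [hbdef]; linarith [(hA i j).2]
  have hWt0 : ∀ (len : ℕ) (Q : ℕ → Fin n), Wt b len Q ≤ 0 := fun len Q =>
    Finset.sum_nonpos fun t _ => hb0 _ _
  have hCW0 : ∀ c ∈ CW b, c ≤ 0 := by
    rintro c ⟨d, Q, _, _, _, rfl⟩; exact hWt0 d Q
  have hSW0 : ∀ w ∈ SWs b, w ≤ 0 := by
    rintro w ⟨len, Q, _, rfl⟩; exact hWt0 len Q
  obtain ⟨δ, hδpos, hδ⟩ := exists_delta (CW_finite hn b)
  set M : ℕ := Nat.ceil (1/δ) with hM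
  set Cneg : Set ℝ := {x ∈ CW b | x < 0} with hCneg
  have hCnegF : Cneg.Finite := (CW_finite hn b).subset (Set.sep_subset _ _)
  set V : Set ℝ := {0} ∪ (fun p : ℝ × ℝ => 1 + p.1 + p.2) '' ((SWs b) ×ˢ NS Cneg M) with hV
  have hVF : V.Finite :=
    (Set.finite_singleton 0).union
      (Set.Finite.image _ ((SWs_finite hn b).prod (NS_finite hCnegF M)))
  -- every entry of every power is in V
  have hmemV : ∀ (t : ℕ) (i k : Fin n), lukPow1 A t i k ∈ V := by
    intro t i k
    rw [lukPow1_eq_mp A hA, ← hbdef]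
    rcases le_or_gt (1 + mpPow1 b t i k) 0 with h | h
    · rw [max_eq_left h]; exact Or.inl rfl
    · rw [max_eq_right h.le]
      right
      obtain ⟨Q, hQ0, hQ1, hQw⟩ := mpPow1_attained b t i k
      obtain ⟨w0, m, c, hw0, hc, heq, _⟩ := walk_decomp hn b (t+1) Q
      obtain ⟨m', c', hc', hsum⟩ := neg_filter c (CW b) hc (fun i => hCW0 _ (hc i))
      have hmp : mpPow1 b t i k = w0 + ∑ j, c' j := by rw [hQw, heq, hsum]
      have hw0le : w0 ≤ 0 := hSW0 _ hw0
      have hsum_gt : (-1 : ℝ) < ∑ j, c' j := by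
        rw [hmp] at h; linarith
      have hec : ∀ j, c' j ≤ -δ := fun j => hδ _ (hc' j).1 (hc' j).2
      have hsle : ∑ j, c' j ≤ (m' : ℝ) * (-δ) := by
        calc ∑ j, c' j ≤ ∑ _j : Fin m', (-δ) := Finset.sum_le_sum fun j _ => hec j
          _ = (m' : ℝ) * (-δ) := by
              rw [Finset.sum_const, Finset.card_univ, Fintype.card_fin, nsmul_eq_mul]
      have hm'M : m' ≤ M := by
        have h1 : (m' : ℝ) * δ < 1 := by linarith
        have h2 : (m' : ℝ) < 1/δ := by rw [lt_div_iff₀ hδpos]; linarith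
        have h3 : (m' : ℝ) ≤ (M : ℝ) := le_trans h2.le (Nat.le_ceil _)
        exact_mod_cast h3
      refine ⟨(w0, ∑ j, c' j), ⟨hw0, NS_mono hm'M (sum_mem_NS m' c' fun j => (hc' j))⟩, ?_⟩
      simp only
      rw [hmp]; ring
  -- part 1: ultimate periodicity via pigeonhole
  have part1 : ∃ T p : ℕ, 1 ≤ p ∧ ∀ t, T ≤ t → lukPow1 A (t + p) = lukPow1 A t := by
    set MS : Set (Fin n → Fin n → ℝ) :=
      Set.pi Set.univ (fun _ => Set.pi Set.univ fun _ => V) with hMS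
    have hMSF : MS.Finite := Set.Finite.pi fun i => Set.Finite.pi fun j => hVF
    haveI := hMSF.to_subtype
    have hg : ∀ t, lukPow1 A t ∈ MS := fun t i _ j _ => hmemV t i j
    obtain ⟨x, y, hxy, hfeq⟩ :=
      Finite.exists_ne_map_eq_of_infinite (fun t : ℕ => (⟨lukPow1 A t, hg t⟩ : MS))
    have hfeq' : lukPow1 A x = lukPow1 A y := congrArg Subtype.val hfeq
    have hstep : ∀ (t1 t2 : ℕ), lukPow1 A t1 = lukPow1 A t2 →
        ∀ s, lukPow1 A (t1 + s) = lukPow1 A (t2 + s) := by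
      intro t1 t2 h s
      induction s with
      | zero => simpa using h
      | succ s ih =>
        show lukMul A (lukPow1 A (t1 + s)) = lukMul A (lukPow1 A (t2 + s))
        rw [ih]
    obtain ⟨x, y, hlt, hfeq'⟩ : ∃ x y : ℕ, x < y ∧ lukPow1 A x = lukPow1 A y := by
      rcases hxy.lt_or_gt with h | h
      · exact ⟨x, y, h, hfeq'⟩
      · exact ⟨y, x, h, hfeq'.symm⟩
    refine ⟨x, y - x, by omega, fun t ht => ?_⟩
    have e1 : t + (y - x) = y + (t - x) := by omega
    have e2 : x + (t - x) = t := by omega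
    rw [e1, ← hstep x y hfeq' (t - x), e2]
  refine ⟨part1, fun hρ => ?_⟩
  -- part 2
  set ρ := maxCycleMean A with hρdef
  have hbdd : BddAbove { r | ∃ k, 1 ≤ k ∧ k ≤ Fintype.card (Fin n) ∧
      ∃ P : Fin (k + 1) → Fin n, P 0 = P (Fin.last k) ∧ r = walkWeight A k P / (k : ℝ) } := by
    refine ⟨1, ?_⟩
    rintro r ⟨k, hk1, hkn, P, hPc, rfl⟩
    have hwk : walkWeight A k P ≤ k := by
      calc walkWeight A k P ≤ ∑ _t : Fin k, (1:ℝ) :=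
            Finset.sum_le_sum fun t _ => (hA _ _).2
        _ = k := by rw [Finset.sum_const, Finset.card_univ, Fintype.card_fin, nsmul_eq_mul, mul_one]
    rw [div_le_one (by exact_mod_cast hk1 : (0:ℝ) < k)]
    exact hwk
  have hcyc : ∀ c ∈ CW b, c ≤ ρ - 1 := by
    rintro c ⟨d, Q, hd1, hdn, hcl, rfl⟩
    have hWtA : Wt b d Q = Wt A d Q - d := by
      simp only [Wt, hbdef, Finset.sum_sub_distrib, Finset.sum_const, Finset.card_range,
        nsmul_eq_mul, mul_one]
    have hww : walkWeight A d (fun s : Fin (d+1) => Q s.val) = Wt A d Q := by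
      rw [walkWeight, Wt, ← Fin.sum_univ_eq_sum_range (fun t => A (Q t) (Q (t+1))) d]
      apply Finset.sum_congr rfl
      intro t _
      simp [Fin.coe_castSucc, Fin.val_succ]
    have hmemρ : Wt A d Q / d ∈ { r | ∃ k, 1 ≤ k ∧ k ≤ Fintype.card (Fin n) ∧
        ∃ P : Fin (k + 1) → Fin n, P 0 = P (Fin.last k) ∧ r = walkWeight A k P / (k : ℝ) } := by
      refine ⟨d, hd1, by rw [Fintype.card_fin]; exact hdn,
        fun s : Fin (d+1) => Q s.val, ?_, by rw [hww]⟩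
      show Q ((0 : Fin (d+1)) : ℕ) = Q ((Fin.last d : Fin (d+1)) : ℕ)
      rw [Fin.val_zero, Fin.val_last]
      exact hcl
    have hle : Wt A d Q / d ≤ ρ := le_csSup hbdd hmemρ
    have hd0 : (1:ℝ) ≤ (d:ℝ) := by exact_mod_cast hd1
    rw [div_le_iff₀ (by linarith)] at hle
    rw [hWtA]
    nlinarith
  set ε := 1 - ρ with hε
  have hεpos : 0 < ε := by simp only [hε]; linarith
  refine ⟨n * (Nat.ceil (1/ε) + 2), fun t ht => ?_⟩
  funext i k
  rw [lukPow1_eq_mp A hA, ← hbdef]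
  have hmple : mpPow1 b t i k ≤ -1 := by
    obtain ⟨Q, hQ0, hQ1, hQw⟩ := mpPow1_attained b t i k
    obtain ⟨w0, m, c, hw0, hc, heq, hlb⟩ := walk_decomp hn b (t+1) Q
    have hsle : ∑ j, c j ≤ (m : ℝ) * (ρ - 1) := by
      calc ∑ j, c j ≤ ∑ _j : Fin m, (ρ - 1) := Finset.sum_le_sum fun j _ => hcyc _ (hc j)
        _ = (m : ℝ) * (ρ - 1) := by
            rw [Finset.sum_const, Finset.card_univ, Fintype.card_fin, nsmul_eq_mul]
    -- length bound gives m ≥ 1/ε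
    have hcast : (t : ℝ) + 1 ≤ (n : ℝ) - 1 + (m : ℝ) * n := by
      have := hlb
      have h1 : t + 1 ≤ (n - 1) + m * n := this
      have h2 : ((t + 1 : ℕ) : ℝ) ≤ (((n-1) + m * n : ℕ) : ℝ) := by exact_mod_cast h1
      push_cast at h2
      rw [Nat.cast_sub hn] at h2
      push_cast at h2
      linarith
    have htT : (n : ℝ) * (Nat.ceil (1/ε) + 2) ≤ (t : ℝ) := by exact_mod_cast ht
    have hceil : 1/ε ≤ (Nat.ceil (1/ε) : ℝ) := Nat.le_ceil _
    have hnpos : (0:ℝ) < n := by exact_mod_cast hn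
    have hmge : 1/ε ≤ (m : ℝ) := by
      have h3 : (n : ℝ) * (1/ε) ≤ (n : ℝ) * (m : ℝ) := by nlinarith
      exact le_of_mul_le_mul_left h3 hnpos
    have hmε : 1 ≤ (m : ℝ) * ε := by
      rw [div_le_iff₀ hεpos] at hmge
      nlinarith
    have hw0le : w0 ≤ 0 := hSW0 _ hw0
    rw [hQw, heq]
    have : (m : ℝ) * (ρ - 1) ≤ -1 := by
      have : (m:ℝ) * (ρ - 1) = -((m:ℝ) * ε) := by rw [hε]; ring
      rw [this]; linarith
    linarith
  rw [max_eq_left (by linarith)]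
end
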